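/- If a random variable X satisfies ‖X‖_{L_p} ≤ Σ_{k=1}^{d} min_{l∈T} p^{e_{k,l}} γ_{k,l} for all p ≥ p₀ ≥ 0, where T is a finite set and γ_{k,l} > 0, then for all t > 0, P(|X| > t) ≤ e^{p₀} exp(− min_{k∈[d]} max_{l∈T} (t/(e·d·γ_{k,l}))^{1/e_{k,l}}). -/

import Mathlib

open MeasureTheory Finset

/-- Moments and tail bounds: mixed-tail version. -/
theorem moment_tail_bound {Ω : Type*} [MeasurableSpace Ω] (μ : Measure Ω)
    [IsProbabilityMeasure μ] (X : Ω → ℝ) (hX : Measurable X)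
    (d : ℕ) (hd : 0 < d) {ι : Type*} (T : Finset ι) (hT : T.Nonempty)
    (e γ : Fin d → ι → ℝ)
    (he : ∀ k, ∀ l ∈ T, 0 < e k l) (hγ : ∀ k, ∀ l ∈ T, 0 < γ k l)
    (p₀ : ℝ) (hp₀ : 0 ≤ p₀)
    (hmom : ∀ p, p₀ ≤ p →
      (∫⁻ ω, ENNReal.ofReal (|X ω| ^ p) ∂μ) ^ (1 / p) ≤
        ENNReal.ofReal (∑ k : Fin d, T.inf' hT fun l => p ^ e k l * γ k l))
    (t : ℝ) (ht : 0 < t) :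
    μ {ω | t < |X ω|} ≤
      ENNReal.ofReal (Real.exp p₀ *
        Real.exp (- (Finset.univ.inf' ⟨⟨0, hd⟩, Finset.mem_univ _⟩
          fun k : Fin d => T.sup' hT
            fun l => (t / (Real.exp 1 * d * γ k l)) ^ (1 / e k l)))) := by
  set u : ℝ := Finset.univ.inf' ⟨⟨0, hd⟩, Finset.mem_univ _⟩
      (fun k : Fin d => T.sup' hT fun l => (t / (Real.exp 1 * d * γ k l)) ^ (1 / e k l))
      with hu_def
  have hd' : (0 : ℝ) < d := by exact_mod_cast hd
  by_cases hcase : u ≤ p₀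
  · calc μ {ω | t < |X ω|} ≤ 1 := prob_le_one
      _ = ENNReal.ofReal 1 := by simp
      _ ≤ _ := by
          apply ENNReal.ofReal_le_ofReal
          rw [← Real.exp_add]
          exact Real.one_le_exp (by linarith)
  · push_neg at hcase
    have hu_pos : 0 < u := lt_of_le_of_lt hp₀ hcase
    set S : ℝ := ∑ k : Fin d, T.inf' hT fun l => u ^ e k l * γ k l with hS
    have hSnn : 0 ≤ S := by
      apply Finset.sum_nonneg
      intro k _
      have : (0 : ℝ) < T.inf' hT fun l => u ^ e k l * γ k l := by
        rw [Finset.lt_inf'_iff]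
        intro l hl
        exact mul_pos (Real.rpow_pos_of_pos hu_pos _) (hγ k l hl)
      exact this.le
    -- key real inequality: S ≤ t / e
    have hkey : S ≤ t / Real.exp 1 := by
      have hterm : ∀ k : Fin d,
          (T.inf' hT fun l => u ^ e k l * γ k l) ≤ t / (Real.exp 1 * d) := by
        intro k
        have hle : u ≤ T.sup' hT fun l => (t / (Real.exp 1 * d * γ k l)) ^ (1 / e k l) :=
          Finset.inf'_le _ (Finset.mem_univ k)
        obtain ⟨l, hl, hle2⟩ := (Finset.le_sup'_iff hT).mp hle
        have hcpos : 0 < t / (Real.exp 1 * d * γ k l) :=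
          div_pos ht (mul_pos (mul_pos (Real.exp_pos 1) hd') (hγ k l hl))
        have hup : u ^ e k l ≤ t / (Real.exp 1 * d * γ k l) := by
          have := Real.rpow_le_rpow hu_pos.le hle2 (he k l hl).le
          rwa [one_div, Real.rpow_inv_rpow hcpos.le (he k l hl).ne'] at this
        have h2 : u ^ e k l * γ k l ≤ t / (Real.exp 1 * d) := by
          have h := mul_le_mul_of_nonneg_right hup (hγ k l hl).le
          have heq : t / (Real.exp 1 * (d : ℝ) * γ k l) * γ k l = t / (Real.exp 1 * d) := by
            rw [div_mul_eq_mul_div, mul_div_mul_right _ _ (hγ k l hl).ne']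
          rwa [heq] at h
        exact le_trans (Finset.inf'_le _ hl) h2
      calc S ≤ ∑ _k : Fin d, t / (Real.exp 1 * d) := Finset.sum_le_sum fun k _ => hterm k
        _ = d * (t / (Real.exp 1 * d)) := by
            rw [Finset.sum_const, Finset.card_univ, Fintype.card_fin, nsmul_eq_mul]
        _ = t / Real.exp 1 := by field_simp
    -- Markov
    have hmeas : AEMeasurable (fun ω => ENNReal.ofReal (|X ω| ^ u)) μ :=
      (ENNReal.measurable_ofReal.comp (hX.abs.pow measurable_const)).aemeasurable
    have hsub : {ω | t < |X ω|} ⊆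
        {ω | ENNReal.ofReal (t ^ u) ≤ ENNReal.ofReal (|X ω| ^ u)} := fun ω hω =>
      ENNReal.ofReal_le_ofReal (Real.rpow_le_rpow ht.le (le_of_lt hω) hu_pos.le)
    have h1 : ENNReal.ofReal (t ^ u) * μ {ω | t < |X ω|} ≤
        ∫⁻ ω, ENNReal.ofReal (|X ω| ^ u) ∂μ :=
      le_trans (mul_le_mul_right (measure_mono hsub) _)
        (mul_meas_ge_le_lintegral₀ hmeas (ENNReal.ofReal (t ^ u)))
    have h2 : (∫⁻ ω, ENNReal.ofReal (|X ω| ^ u) ∂μ) ≤ ENNReal.ofReal S ^ u := by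
      calc (∫⁻ ω, ENNReal.ofReal (|X ω| ^ u) ∂μ)
          = ((∫⁻ ω, ENNReal.ofReal (|X ω| ^ u) ∂μ) ^ (1 / u)) ^ u := by
            rw [one_div, ENNReal.rpow_inv_rpow hu_pos.ne']
        _ ≤ ENNReal.ofReal S ^ u := ENNReal.rpow_le_rpow (hmom u hcase.le) hu_pos.le
    have htu_pos : (0 : ℝ) < t ^ u := Real.rpow_pos_of_pos ht u
    have h3 : μ {ω | t < |X ω|} ≤ ENNReal.ofReal S ^ u / ENNReal.ofReal (t ^ u) := by
      rw [ENNReal.le_div_iff_mul_le (Or.inl (ENNReal.ofReal_pos.mpr htu_pos).ne')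
        (Or.inl ENNReal.ofReal_ne_top), mul_comm]
      exact le_trans h1 h2
    have h4 : ENNReal.ofReal S ^ u / ENNReal.ofReal (t ^ u) = ENNReal.ofReal (S / t) ^ u := by
      rw [← ENNReal.ofReal_rpow_of_pos ht, ← ENNReal.div_rpow_of_nonneg _ _ hu_pos.le,
        ENNReal.ofReal_div_of_pos ht]
    have hdiv : S / t ≤ Real.exp (-1) := by
      rw [Real.exp_neg, ← one_div, div_le_div_iff₀ ht (Real.exp_pos 1)]
      calc S * Real.exp 1 ≤ (t / Real.exp 1) * Real.exp 1 :=
            mul_le_mul_of_nonneg_right hkey (Real.exp_pos 1).le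
        _ = t := div_mul_cancel₀ t (Real.exp_pos 1).ne'
        _ = 1 * t := by ring
    have h5 : ENNReal.ofReal (S / t) ^ u ≤ ENNReal.ofReal (Real.exp (-u)) := by
      calc ENNReal.ofReal (S / t) ^ u ≤ ENNReal.ofReal (Real.exp (-1)) ^ u :=
            ENNReal.rpow_le_rpow (ENNReal.ofReal_le_ofReal hdiv) hu_pos.le
        _ = ENNReal.ofReal (Real.exp (-1) ^ u) :=
            ENNReal.ofReal_rpow_of_pos (Real.exp_pos _)
        _ = ENNReal.ofReal (Real.exp (-u)) := by
            congr 1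
            rw [Real.exp_neg, Real.inv_rpow (Real.exp_pos 1).le, Real.exp_one_rpow,
              ← Real.exp_neg]
    have h6 : ENNReal.ofReal (Real.exp (-u)) ≤
        ENNReal.ofReal (Real.exp p₀ * Real.exp (-u)) := by
      apply ENNReal.ofReal_le_ofReal
      nlinarith [Real.one_le_exp hp₀, Real.exp_pos (-u)]
    calc μ {ω | t < |X ω|} ≤ ENNReal.ofReal S ^ u / ENNReal.ofReal (t ^ u) := h3
      _ = ENNReal.ofReal (S / t) ^ u := h4
      _ ≤ ENNReal.ofReal (Real.exp (-u)) := h5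
      _ ≤ _ := h6
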